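/- Let G₀ ⊂ G₁ ⊂ … ⊂ G_d be subsets of S^d ⊂ ℝ^{d+1} such that each Gₖ spans a (k+1)-dimensional linear subspace Lₖ of ℝ^{d+1} with L₀ ⊂ L₁ ⊂ … ⊂ L_d, and such that each Gₖ lies in a fixed closed halfspace of Lₖ bounded by L_{k−1} (for k ≥ 1). Then for any two choices of linearly independent tuples (x₀,…,x_d) and (x′₀,…,x′_d) with xᵢ, x′ᵢ ∈ Gᵢ, the determinants det(x₀,…,x_d) and det(x′₀,…,x′_d) have the same (non-zero) sign. -/

import Mathlib

open scoped RealInnerProductSpace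

/-- **The sign of the determinant of a transversal of a complete flag of spherical faces is
determined by the flag.**  Let `G₀ ⊆ G₁ ⊆ … ⊆ G_d` be subsets of `S^d ⊂ ℝ^(d+1)`, with `G₀`
a single point, each `Gₖ` spanning a `(k+1)`-dimensional subspace `Lₖ`, and each `Gₖ`
(`k ≥ 1`) lying in a closed halfspace of `Lₖ` bounded by `L_{k−1}` (witnessed by a vector
`b ∈ Lₖ`, `b ⊥ L_{k−1}`, `⟪b, ·⟫ ≥ 0` on `Gₖ`).  Then any two linearly independent
transversals `(x₀,…,x_d)` and `(x′₀,…,x′_d)` with `xᵢ, x′ᵢ ∈ Gᵢ` have determinants of the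
same non-zero sign. -/
theorem det_sign_determined_by_flag
    (d : ℕ) (G : Fin (d + 1) → Set (EuclideanSpace ℝ (Fin (d + 1))))
    (hmono : ∀ k l : Fin (d + 1), k ≤ l → G k ⊆ G l)
    (hsph : ∀ k, G k ⊆ Metric.sphere 0 1)
    (h0 : ∀ v w, v ∈ G 0 → w ∈ G 0 → v = w)
    (hdim : ∀ k : Fin (d + 1),
      Module.finrank ℝ (Submodule.span ℝ (G k)) = (k : ℕ) + 1)
    (hhalf : ∀ k : Fin d, ∃ b : EuclideanSpace ℝ (Fin (d + 1)),
      b ∈ Submodule.span ℝ (G k.succ) ∧ b ≠ 0 ∧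
      (∀ y ∈ Submodule.span ℝ (G k.castSucc), ⟪b, y⟫ = 0) ∧
      (∀ v ∈ G k.succ, 0 ≤ ⟪b, v⟫))
    (x x' : Fin (d + 1) → EuclideanSpace ℝ (Fin (d + 1)))
    (hx : ∀ i, x i ∈ G i) (hx' : ∀ i, x' i ∈ G i)
    (hli : LinearIndependent ℝ x) (hli' : LinearIndependent ℝ x') :
    0 < Matrix.det (Matrix.of fun i j => x i j) *
        Matrix.det (Matrix.of fun i j => x' i j) := by
  classical
  have hcard : Fintype.card (Fin (d + 1))
      = Module.finrank ℝ (EuclideanSpace ℝ (Fin (d + 1))) := by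
    simp [finrank_euclideanSpace]
  -- initial segments of an adapted transversal span the flag subspaces
  have hspan : ∀ (z : Fin (d + 1) → EuclideanSpace ℝ (Fin (d + 1))),
      (∀ i, z i ∈ G i) → LinearIndependent ℝ z → ∀ k : Fin (d + 1),
      Submodule.span ℝ (z '' Set.Iic k) = Submodule.span ℝ (G k) := by
    intro z hz hlz k
    have hle : Submodule.span ℝ (z '' Set.Iic k) ≤ Submodule.span ℝ (G k) := by
      rw [Submodule.span_le]
      rintro _ ⟨j, hj, rfl⟩
      exact Submodule.subset_span (hmono j k hj (hz j))
    refine Submodule.eq_of_le_of_finrank_le hle ?_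
    have h1 : LinearIndependent ℝ (fun j : Set.Iic k => z j) :=
      hlz.comp _ Subtype.val_injective
    have h2 := finrank_span_eq_card h1
    rw [show Set.range (fun j : Set.Iic k => z j) = z '' Set.Iic k from
      Set.range_restrict z (Set.Iic k)] at h2
    rw [hdim k, h2, Fintype.card_Iic, Fin.card_Iic]
  -- inner product vanishing on a set vanishes on its span
  have hinner_span : ∀ (b : EuclideanSpace ℝ (Fin (d + 1)))
      (s : Set (EuclideanSpace ℝ (Fin (d + 1)))),
      (∀ v ∈ s, ⟪b, v⟫ = 0) → ∀ y ∈ Submodule.span ℝ s, ⟪b, y⟫ = 0 := by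
    intro b s hs y hy
    induction hy using Submodule.span_induction with
    | mem v hv => exact hs v hv
    | zero => simp
    | add u v _ _ hu hv => rw [inner_add_right, hu, hv, add_zero]
    | smul c v _ hv => rw [real_inner_smul_right, hv, mul_zero]
  -- the basis formed by x
  let B : Module.Basis (Fin (d + 1)) ℝ (EuclideanSpace ℝ (Fin (d + 1))) :=
    basisOfLinearIndependentOfCardEqFinrank hli hcard
  have hB : ⇑B = x := coe_basisOfLinearIndependentOfCardEqFinrank hli hcard
  -- change of basis matrix
  set C : Matrix (Fin (d + 1)) (Fin (d + 1)) ℝ :=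
    Matrix.of fun i j => B.repr (x' i) j with hC
  have htri : ∀ i j : Fin (d + 1), i < j → C i j = 0 := by
    intro i j hij
    have hmem : x' i ∈ Submodule.span ℝ (⇑B '' Set.Iic i) := by
      rw [hB, hspan x hx hli i, ← hspan x' hx' hli' i]
      exact Submodule.subset_span ⟨i, le_refl i, rfl⟩
    have hsupp := B.mem_span_image.mp hmem
    by_contra h
    have hj : j ∈ (B.repr (x' i)).support := Finsupp.mem_support_iff.mpr h
    exact absurd (hsupp hj) (not_le.mpr hij)
  have hrepr : ∀ i, x' i = ∑ j, C i j • x j := by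
    intro i
    have h := B.sum_repr (x' i)
    rw [hB] at h
    exact h.symm
  -- diagonal entries are positive
  have hdiag : ∀ i, 0 < C i i := by
    intro i
    rcases Fin.eq_zero_or_eq_succ i with rfl | ⟨k, rfl⟩
    · have hx0 : x' 0 = B 0 := by rw [hB]; exact h0 _ _ (hx' 0) (hx 0)
      have h1 : C 0 0 = 1 := by simp [hC, hx0, Module.Basis.repr_self]
      rw [h1]; exact one_pos
    · obtain ⟨b, hb1, hb2, hb3, hb4⟩ := hhalf k
      have hzx : ∀ (z : Fin (d + 1) → EuclideanSpace ℝ (Fin (d + 1))),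
          (∀ i, z i ∈ G i) → ∀ j : Fin (d + 1), j < k.succ → ⟪b, z j⟫ = 0 := by
        intro z hz j hj
        refine hb3 _ (Submodule.subset_span (hmono j k.castSucc ?_ (hz j)))
        rw [Fin.le_def]
        rw [Fin.lt_def] at hj
        simp only [Fin.val_succ] at hj
        simp only [Fin.coe_castSucc]
        omega
      have hpos : ∀ (z : Fin (d + 1) → EuclideanSpace ℝ (Fin (d + 1))),
          (∀ i, z i ∈ G i) → LinearIndependent ℝ z → 0 < ⟪b, z k.succ⟫ := by
        intro z hz hlz
        have hnn : (0:ℝ) ≤ ⟪b, z k.succ⟫ := hb4 _ (hz k.succ)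
        rcases hnn.lt_or_eq with h | h
        · exact h
        · exfalso
          have hall : ∀ v ∈ z '' Set.Iic k.succ, ⟪b, v⟫ = 0 := by
            rintro _ ⟨j, hj, rfl⟩
            have hj2 : j ≤ k.succ := hj
            rcases lt_or_eq_of_le hj2 with hj' | rfl
            · exact hzx z hz j hj'
            · exact h.symm
          have hb0 : ⟪b, b⟫ = 0 := by
            refine hinner_span b _ hall b ?_
            rw [hspan z hz hlz k.succ]; exact hb1
          exact hb2 (inner_self_eq_zero.mp hb0)
      have hsum : ⟪b, x' k.succ⟫ = C k.succ k.succ * ⟪b, x k.succ⟫ := by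
        rw [hrepr k.succ, inner_sum]
        rw [Finset.sum_eq_single k.succ]
        · rw [real_inner_smul_right]
        · intro j _ hj
          rcases lt_or_gt_of_ne hj with h1 | h1
          · rw [real_inner_smul_right, hzx x hx j h1, mul_zero]
          · rw [htri _ _ h1, zero_smul, inner_zero_right]
        · intro h; exact absurd (Finset.mem_univ _) h
      have h1 := hpos x hx hli
      have h2 := hpos x' hx' hli'
      rw [hsum] at h2
      nlinarith [h1, h2]
  -- matrix identity
  have hM : (Matrix.of fun i j => x' i j) = C * (Matrix.of fun i j => x i j) := by
    ext i j
    rw [Matrix.mul_apply]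
    have h := congrArg (EuclideanSpace.proj (𝕜 := ℝ) j) (hrepr i)
    simp only [map_sum, map_smul, smul_eq_mul] at h
    simpa using h
  -- determinant of x is nonzero
  have hdet : (Matrix.of fun i j => x i j).det ≠ 0 := by
    have hrows : LinearIndependent ℝ (fun i => (Matrix.of fun i j => x i j) i) := by
      have := hli.map' (EuclideanSpace.equiv (Fin (d + 1)) ℝ).toLinearEquiv.toLinearMap
        (LinearMap.ker_eq_bot_of_injective
          (EuclideanSpace.equiv (Fin (d + 1)) ℝ).toLinearEquiv.injective)
      exact this
    have := Matrix.linearIndependent_rows_iff_isUnit.mp hrows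
    exact ((Matrix.isUnit_iff_isUnit_det _).mp this).ne_zero
  have hdetC : 0 < C.det := by
    rw [Matrix.det_of_lowerTriangular C
      (fun i j h => htri i j (OrderDual.toDual_lt_toDual.mp h))]
    exact Finset.prod_pos fun i _ => hdiag i
  rw [hM, Matrix.det_mul]
  have hring : (Matrix.of fun i j => x i j).det *
      (C.det * (Matrix.of fun i j => x i j).det)
      = C.det * (Matrix.of fun i j => x i j).det ^ 2 := by ring
  rw [hring]
  exact mul_pos hdetC (sq_pos_of_ne_zero hdet)
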